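/- With the Lévy–Khintchine data (μ, c, K) and κ as defined, there exists a constant c₁ > 0 such that for all λ ∈ [0,1], all z ∈ ℂ with Re z ∈ {0, R, 2R}, and all n ∈ {0,1,2}: |∂ⁿ_λκ(λ,z)| ≤ c₁·(1 + |z|^{3+n}), where ∂⁰_λκ := κ. -/

import Mathlib

open MeasureTheory Complex Set

lemma pow_le_one_add_pow (u : ℝ) (hu : 0 ≤ u) (k j : ℕ) (h : k ≤ j) : u ^ k ≤ 1 + u ^ j := by
  rcases le_total u 1 with h1 | h1
  · have h2 : u ^ k ≤ 1 := pow_le_one₀ hu h1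
    have h3 : 0 ≤ u ^ j := pow_nonneg hu j
    linarith
  · have h2 : u ^ k ≤ u ^ j := pow_le_pow_right₀ h1 h
    linarith [pow_nonneg hu k]
lemma hasDerivAt_cexp_real (w : ℂ) (l : ℝ) :
    HasDerivAt (fun l : ℝ => Complex.exp ((l : ℂ) * w)) (w * Complex.exp ((l : ℂ) * w)) l := by
  have h : HasDerivAt (fun l : ℝ => (l : ℂ) * w) w l := by
    simpa using (Complex.ofRealCLM.hasDerivAt (x := l)).mul_const w
  simpa [mul_comm] using h.cexp

lemma taylor_two (w : ℂ) :
    Complex.exp w - 1 - w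
      = w ^ 2 * ∫ t in Set.Ioc (0 : ℝ) 1, (1 - (t : ℂ)) * Complex.exp ((t : ℂ) * w) := by
  have h0 : (∫ t in Set.Ioc (0 : ℝ) 1, (1 - (t : ℂ)) * Complex.exp ((t : ℂ) * w))
      = ∫ t in (0:ℝ)..1, (1 - (t : ℂ)) * Complex.exp ((t : ℂ) * w) :=
    (intervalIntegral.integral_of_le zero_le_one).symm
  rw [h0, ← intervalIntegral.integral_const_mul]
  have key : ∀ t ∈ Set.uIcc (0:ℝ) 1,
      HasDerivAt (fun t : ℝ => Complex.exp ((t : ℂ) * w) * (w * (1 - (t : ℂ)) + 1))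
        (w ^ 2 * ((1 - (t : ℂ)) * Complex.exp ((t : ℂ) * w))) t := by
    intro t _
    have h1 := hasDerivAt_cexp_real w t
    have h2 : HasDerivAt (fun t : ℝ => w * (1 - (t : ℂ)) + 1) (-w) t := by
      have hb : HasDerivAt (fun t : ℝ => (t : ℂ)) 1 t := by
        simpa using (hasDerivAt_id t).ofReal_comp
      simpa using ((hb.const_sub 1).const_mul w).add_const 1
    have := h1.mul h2
    refine this.congr_deriv ?_
    ring
  have hint : IntervalIntegrable
      (fun t : ℝ => w ^ 2 * ((1 - (t : ℂ)) * Complex.exp ((t : ℂ) * w))) volume 0 1 := by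
    apply Continuous.intervalIntegrable
    fun_prop
  rw [intervalIntegral.integral_eq_sub_of_hasDerivAt key hint]
  simp [Complex.exp_zero]
  ring

noncomputable def gnAux (z : ℂ) (n : ℕ) (lam : ℝ) (x : ℝ) : ℂ :=
  ((x : ℂ)) ^ (2 + n) *
    ∫ t in Set.Ioc (0 : ℝ) 1, (t : ℂ) ^ n * (1 - (t : ℂ)) *
      Complex.exp ((lam : ℂ) * ((t : ℂ) * z * (x : ℂ)))

lemma gnAux_stronglyMeasurable (z : ℂ) (n : ℕ) (lam : ℝ) :
    StronglyMeasurable (fun x => gnAux z n lam x) := by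
  have hc : Continuous (fun p : ℝ × ℝ => (p.2 : ℂ) ^ n * (1 - (p.2 : ℂ)) *
      Complex.exp ((lam : ℂ) * ((p.2 : ℂ) * z * (p.1 : ℂ)))) := by fun_prop
  have h1 : StronglyMeasurable (fun x : ℝ => ∫ t in Set.Ioc (0 : ℝ) 1,
      (t : ℂ) ^ n * (1 - (t : ℂ)) * Complex.exp ((lam : ℂ) * ((t : ℂ) * z * (x : ℂ)))) :=
    hc.stronglyMeasurable.integral_prod_right'
  exact ((continuous_ofReal.pow _).stronglyMeasurable).mul h1

lemma gnAux_hasDerivAt (z : ℂ) (n : ℕ) (x : ℝ) (lam : ℝ) :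
    HasDerivAt (fun l => gnAux z n l x) (z * gnAux z (n + 1) lam x) lam := by
  have main : HasDerivAt
      (fun l : ℝ => ∫ t in Set.Ioc (0 : ℝ) 1,
        (t : ℂ) ^ n * (1 - (t : ℂ)) * Complex.exp ((l : ℂ) * ((t : ℂ) * z * (x : ℂ))))
      (∫ t in Set.Ioc (0 : ℝ) 1,
        (z * (x : ℂ)) * ((t : ℂ) ^ (n+1) * (1 - (t : ℂ)) *
          Complex.exp ((lam : ℂ) * ((t : ℂ) * z * (x : ℂ))))) lam := by
    refine (hasDerivAt_integral_of_dominated_loc_of_deriv_le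
      (F := fun (l : ℝ) (t : ℝ) => (t : ℂ) ^ n * (1 - (t : ℂ)) *
        Complex.exp ((l : ℂ) * ((t : ℂ) * z * (x : ℂ))))
      (F' := fun (l : ℝ) (t : ℝ) => (z * (x : ℂ)) * ((t : ℂ) ^ (n+1) * (1 - (t : ℂ)) *
        Complex.exp ((l : ℂ) * ((t : ℂ) * z * (x : ℂ)))))
      (bound := fun _ => ‖z * (x:ℂ)‖ * Real.exp ((|lam| + 1) * ‖z * (x:ℂ)‖))
      (Metric.ball_mem_nhds lam one_pos) ?_ ?_ ?_ ?_ ?_ ?_).2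
    · filter_upwards with l
      exact (Continuous.aestronglyMeasurable (by fun_prop))
    · apply Continuous.integrableOn_Ioc
      fun_prop
    · exact (Continuous.aestronglyMeasurable (by fun_prop))
    · filter_upwards [ae_restrict_mem measurableSet_Ioc] with t ht l hl
      have hl' : |l| ≤ |lam| + 1 := by
        have hd : |l - lam| < 1 := by
          have := Metric.mem_ball.1 hl
          rwa [Real.dist_eq] at this
        have h2 : |l| ≤ |l - lam| + |lam| := by
          simpa using abs_add_le (l - lam) lam
        linarith
      have ht0 : 0 < t := ht.1
      have ht1 : t ≤ 1 := ht.2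
      have habs : |t| ≤ 1 := by rw [abs_of_pos ht0]; exact ht1
      have hexp : ‖Complex.exp ((l : ℂ) * ((t : ℂ) * z * (x : ℂ)))‖
          ≤ Real.exp ((|lam| + 1) * ‖z * (x:ℂ)‖) := by
        rw [Complex.norm_exp]
        apply Real.exp_le_exp.2
        have h3 : ((l : ℂ) * ((t : ℂ) * z * (x : ℂ))).re
            ≤ ‖(l : ℂ) * ((t : ℂ) * z * (x : ℂ))‖ := Complex.re_le_norm _
        refine h3.trans ?_
        have h4 : (l : ℂ) * ((t : ℂ) * z * (x : ℂ)) = ((l : ℂ) * (t : ℂ)) * (z * (x : ℂ)) := by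
          ring
        rw [h4, norm_mul]
        have h5 : ‖(l : ℂ) * (t : ℂ)‖ ≤ |lam| + 1 := by
          rw [← Complex.ofReal_mul, Complex.norm_real, Real.norm_eq_abs, abs_mul]
          calc |l| * |t| ≤ |l| * 1 := by
                exact mul_le_mul_of_nonneg_left habs (abs_nonneg _)
            _ = |l| := mul_one _
            _ ≤ |lam| + 1 := hl'
        calc ‖(l:ℂ) * (t:ℂ)‖ * ‖z * (x:ℂ)‖
            ≤ (|lam| + 1) * ‖z * (x:ℂ)‖ :=
              mul_le_mul_of_nonneg_right h5 (norm_nonneg _)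
          _ = (|lam| + 1) * ‖z * (x:ℂ)‖ := rfl
      have hrest : ‖(t : ℂ) ^ (n+1) * (1 - (t : ℂ)) *
          Complex.exp ((l : ℂ) * ((t : ℂ) * z * (x : ℂ)))‖
          ≤ Real.exp ((|lam| + 1) * ‖z * (x:ℂ)‖) := by
        rw [norm_mul, norm_mul]
        have e1 : ‖(t : ℂ) ^ (n+1)‖ ≤ 1 := by
          rw [norm_pow, Complex.norm_real, Real.norm_eq_abs]
          exact pow_le_one₀ (abs_nonneg _) habs
        have e2 : ‖1 - (t : ℂ)‖ ≤ 1 := by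
          have : (1 : ℂ) - (t : ℂ) = ((1 - t : ℝ) : ℂ) := by push_cast; ring
          rw [this, Complex.norm_real, Real.norm_eq_abs, _root_.abs_of_nonneg (by linarith)]
          linarith
        have hmain : ‖(t : ℂ) ^ (n+1)‖ * ‖1 - (t : ℂ)‖ *
            ‖Complex.exp ((l : ℂ) * ((t : ℂ) * z * (x : ℂ)))‖
            ≤ 1 * 1 * Real.exp ((|lam| + 1) * ‖z * (x:ℂ)‖) :=
          mul_le_mul (mul_le_mul e1 e2 (norm_nonneg _) zero_le_one) hexp (norm_nonneg _)
            (by norm_num)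
        simpa using hmain
      rw [norm_mul]
      exact mul_le_mul_of_nonneg_left hrest (norm_nonneg _)
    · exact integrableOn_const (by simp [Real.volume_Ioc])
    · filter_upwards with t l hl
      have h := (hasDerivAt_cexp_real ((t : ℂ) * z * (x : ℂ)) l).const_mul
        ((t : ℂ) ^ n * (1 - (t : ℂ)))
      refine h.congr_deriv ?_
      ring
  have h2 := main.const_mul ((x : ℂ) ^ (2 + n))
  have heq : (x : ℂ) ^ (2 + n) * ∫ t in Set.Ioc (0 : ℝ) 1,
        (z * (x : ℂ)) * ((t : ℂ) ^ (n+1) * (1 - (t : ℂ)) *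
          Complex.exp ((lam : ℂ) * ((t : ℂ) * z * (x : ℂ))))
      = z * gnAux z (n + 1) lam x := by
    rw [integral_const_mul, gnAux, show 2 + (n + 1) = (2 + n) + 1 by omega, pow_succ]
    ring
  rw [heq] at h2
  exact h2
lemma gnAux_norm_le (z : ℂ) (n : ℕ) (lam x q₁ q₂ : ℝ)
    (h : ∀ t ∈ Set.Ioc (0:ℝ) 1, q₁ ≤ lam * t * z.re ∧ lam * t * z.re ≤ q₂) :
    ‖gnAux z n lam x‖ ≤ |x| ^ (2 + n) * (Real.exp (q₁ * x) + Real.exp (q₂ * x)) := by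
  rw [gnAux, norm_mul]
  have hx : ‖((x : ℂ)) ^ (2 + n)‖ = |x| ^ (2 + n) := by
    rw [norm_pow, Complex.norm_real, Real.norm_eq_abs]
  rw [hx]
  apply mul_le_mul_of_nonneg_left _ (by positivity)
  have hvol : volume (Set.Ioc (0:ℝ) 1) < ⊤ := by simp [Real.volume_Ioc]
  have key : ∀ t ∈ Set.Ioc (0:ℝ) 1,
      ‖(t : ℂ) ^ n * (1 - (t : ℂ)) * Complex.exp ((lam : ℂ) * ((t : ℂ) * z * (x : ℂ)))‖
        ≤ Real.exp (q₁ * x) + Real.exp (q₂ * x) := by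
    intro t ht
    have ht0 : 0 < t := ht.1
    have ht1 : t ≤ 1 := ht.2
    have habs : |t| ≤ 1 := by rw [abs_of_pos ht0]; exact ht1
    rw [norm_mul, norm_mul]
    have e1 : ‖(t : ℂ) ^ n‖ ≤ 1 := by
      rw [norm_pow, Complex.norm_real, Real.norm_eq_abs]
      exact pow_le_one₀ (abs_nonneg _) habs
    have e2 : ‖1 - (t : ℂ)‖ ≤ 1 := by
      have h12 : (1 : ℂ) - (t : ℂ) = ((1 - t : ℝ) : ℂ) := by push_cast; ring
      rw [h12, Complex.norm_real, Real.norm_eq_abs, _root_.abs_of_nonneg (by linarith)]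
      linarith
    have e3 : ‖Complex.exp ((lam : ℂ) * ((t : ℂ) * z * (x : ℂ)))‖
        ≤ Real.exp (q₁ * x) + Real.exp (q₂ * x) := by
      rw [Complex.norm_exp]
      have hre : ((lam : ℂ) * ((t : ℂ) * z * (x : ℂ))).re = (lam * t * z.re) * x := by
        have : (lam : ℂ) * ((t : ℂ) * z * (x : ℂ)) = ((lam * t : ℝ) : ℂ) * z * ((x:ℝ):ℂ) := by
          push_cast; ring
        rw [this]
        simp [Complex.mul_re, Complex.ofReal_re, Complex.ofReal_im]
        try ring
      rw [hre]
      obtain ⟨hq1, hq2⟩ := h t ht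
      rcases le_total 0 x with hx0 | hx0
      · calc Real.exp ((lam * t * z.re) * x) ≤ Real.exp (q₂ * x) :=
            Real.exp_le_exp.2 (mul_le_mul_of_nonneg_right hq2 hx0)
          _ ≤ Real.exp (q₁ * x) + Real.exp (q₂ * x) :=
            le_add_of_nonneg_left (Real.exp_pos _).le
      · calc Real.exp ((lam * t * z.re) * x) ≤ Real.exp (q₁ * x) :=
            Real.exp_le_exp.2 (mul_le_mul_of_nonpos_right hq1 hx0)
          _ ≤ Real.exp (q₁ * x) + Real.exp (q₂ * x) :=
            le_add_of_nonneg_right (Real.exp_pos _).le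
    calc ‖(t : ℂ) ^ n‖ * ‖1 - (t : ℂ)‖ * ‖Complex.exp ((lam : ℂ) * ((t : ℂ) * z * (x : ℂ)))‖
        ≤ 1 * 1 * (Real.exp (q₁ * x) + Real.exp (q₂ * x)) :=
          mul_le_mul (mul_le_mul e1 e2 (norm_nonneg _) zero_le_one) e3 (norm_nonneg _)
            (by norm_num)
      _ = Real.exp (q₁ * x) + Real.exp (q₂ * x) := by ring
  have := norm_setIntegral_le_of_norm_le_const (μ := volume) hvol key
  calc ‖∫ t in Set.Ioc (0:ℝ) 1, (t : ℂ) ^ n * (1 - (t : ℂ)) *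
        Complex.exp ((lam : ℂ) * ((t : ℂ) * z * (x : ℂ)))‖
      ≤ (Real.exp (q₁ * x) + Real.exp (q₂ * x)) * volume.real (Set.Ioc (0:ℝ) 1) := this
    _ = Real.exp (q₁ * x) + Real.exp (q₂ * x) := by simp [Measure.real, Real.volume_Ioc]

lemma integral_one_sub_ioc : (∫ t in Set.Ioc (0:ℝ) 1, (1 - (t : ℂ))) = 1 / 2 := by
  rw [← intervalIntegral.integral_of_le zero_le_one]
  have h1 : IntervalIntegrable (fun _ : ℝ => (1:ℂ)) volume 0 1 := intervalIntegrable_const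
  have h2 : IntervalIntegrable (fun t : ℝ => (t : ℂ)) volume 0 1 :=
    Continuous.intervalIntegrable (Complex.continuous_ofReal) 0 1
  have : (∫ t in (0:ℝ)..1, (1 - (t : ℂ))) = (∫ t in (0:ℝ)..1, (1:ℂ)) - ∫ t in (0:ℝ)..1, (t : ℂ) :=
    intervalIntegral.integral_sub h1 h2
  rw [this]
  have h3 : (∫ t in (0:ℝ)..1, (t : ℂ)) = (((∫ t in (0:ℝ)..1, t) : ℝ) : ℂ) :=
    intervalIntegral.integral_ofReal
  rw [h3, integral_id]
  simp
  norm_num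

lemma gnAux_zero_eq (z : ℂ) (x : ℝ) : gnAux z 0 0 x = ((x:ℂ)) ^ 2 * (1 / 2) := by
  rw [gnAux]
  have : (∫ t in Set.Ioc (0:ℝ) 1, (t : ℂ) ^ 0 * (1 - (t : ℂ)) *
      Complex.exp (((0:ℝ) : ℂ) * ((t : ℂ) * z * (x : ℂ)))) = ∫ t in Set.Ioc (0:ℝ) 1, (1 - (t : ℂ)) := by
    apply integral_congr_ae
    filter_upwards with t
    simp
  rw [this, integral_one_sub_ioc]

lemma integrand_eq (z : ℂ) (lam x : ℝ) :
    Complex.exp ((lam:ℂ) * z * (x:ℂ)) - 1 - (lam:ℂ) * z * (x:ℂ)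
      = ((lam:ℂ) ^ 2 * z ^ 2) * gnAux z 0 lam x := by
  rw [taylor_two ((lam:ℂ) * z * (x:ℂ)), gnAux]
  have hI : (∫ t in Set.Ioc (0:ℝ) 1, (1 - (t : ℂ)) * Complex.exp ((t:ℂ) * ((lam:ℂ) * z * (x:ℂ))))
      = ∫ t in Set.Ioc (0:ℝ) 1, (t : ℂ) ^ 0 * (1 - (t : ℂ)) *
          Complex.exp ((lam : ℂ) * ((t : ℂ) * z * (x : ℂ))) := by
    apply integral_congr_ae
    filter_upwards with t
    have : (t:ℂ) * ((lam:ℂ) * z * (x:ℂ)) = (lam : ℂ) * ((t : ℂ) * z * (x : ℂ)) := by ring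
    rw [this]
    ring
  rw [hI]
  ring
lemma exp_integrableOn (K : Measure ℝ) (s : ℝ)
    (h : ∫⁻ x in {x : ℝ | 1 ≤ |x|}, ENNReal.ofReal (Real.exp (s * x)) ∂K ≠ ⊤) :
    IntegrableOn (fun x => Real.exp (s * x)) {x : ℝ | 1 ≤ |x|} K := by
  refine ⟨(Continuous.aestronglyMeasurable (by fun_prop)), ?_⟩
  rw [hasFiniteIntegral_iff_ofReal (Filter.Eventually.of_forall fun x => (Real.exp_pos _).le)]
  exact h.lt_top

lemma sq_integrableOn_compl (K : Measure ℝ)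
    (hKmin : ∫⁻ x : ℝ, ENNReal.ofReal (min 1 (x ^ 2)) ∂K ≠ ⊤) :
    IntegrableOn (fun x => x ^ 2) {x : ℝ | 1 ≤ |x|}ᶜ K := by
  have hSmeas : MeasurableSet {x : ℝ | 1 ≤ |x|} :=
    measurableSet_le measurable_const continuous_abs.measurable
  refine ⟨(Continuous.aestronglyMeasurable (by fun_prop)), ?_⟩
  rw [hasFiniteIntegral_iff_ofReal (Filter.Eventually.of_forall fun x => sq_nonneg x)]
  have heq : ∫⁻ x in {x : ℝ | 1 ≤ |x|}ᶜ, ENNReal.ofReal (x ^ 2) ∂K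
      = ∫⁻ x in {x : ℝ | 1 ≤ |x|}ᶜ, ENNReal.ofReal (min 1 (x ^ 2)) ∂K := by
    apply setLIntegral_congr_fun hSmeas.compl
    intro x hx
    have hx' : |x| < 1 := not_le.1 hx
    have : x ^ 2 ≤ 1 := by nlinarith [abs_nonneg x, _root_.sq_abs x]
    simp only [min_eq_right this]
  rw [heq]
  exact lt_of_le_of_lt (setLIntegral_le_lintegral _ _) hKmin.lt_top

lemma exp_abs_le (d x : ℝ) : Real.exp (d * |x|) ≤ Real.exp (d * x) + Real.exp (-(d * x)) := by
  rcases abs_cases x with ⟨h, _⟩ | ⟨h, _⟩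
  · rw [h]
    exact le_add_of_nonneg_right (Real.exp_pos _).le
  · rw [h, mul_neg]
    exact le_add_of_nonneg_left (Real.exp_pos _).le

lemma pow_five_le_exp (d x : ℝ) (hd : 0 < d) : |x| ^ 5 ≤ (5 / d) ^ 5 * Real.exp (d * |x|) := by
  have h1 : d * |x| / 5 ≤ Real.exp (d * |x| / 5) :=
    le_trans (by linarith) (Real.add_one_le_exp _)
  have h2 : (d * |x| / 5) ^ 5 ≤ Real.exp (d * |x| / 5) ^ 5 :=
    pow_le_pow_left₀ (by positivity) h1 5
  have h3 : Real.exp (d * |x| / 5) ^ 5 = Real.exp (d * |x|) := by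
    rw [← Real.exp_nat_mul]
    norm_num
    ring_nf
  have h4 : |x| ^ 5 = (5 / d) ^ 5 * (d * |x| / 5) ^ 5 := by
    rw [← mul_pow]
    congr 1
    field_simp
  rw [h4]
  rw [h3] at h2
  exact mul_le_mul_of_nonneg_left h2 (by positivity)

lemma integrable_bound (K : Measure ℝ)
    (hKmin : ∫⁻ x : ℝ, ENNReal.ofReal (min 1 (x ^ 2)) ∂K ≠ ⊤)
    (d p q : ℝ) (hd : 0 < d)
    (h1 : IntegrableOn (fun x => Real.exp ((p - d) * x)) {x : ℝ | 1 ≤ |x|} K)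
    (h2 : IntegrableOn (fun x => Real.exp ((p + d) * x)) {x : ℝ | 1 ≤ |x|} K)
    (h3 : IntegrableOn (fun x => Real.exp ((q - d) * x)) {x : ℝ | 1 ≤ |x|} K)
    (h4 : IntegrableOn (fun x => Real.exp ((q + d) * x)) {x : ℝ | 1 ≤ |x|} K)
    (k : ℕ) (hk2 : 2 ≤ k) (hk5 : k ≤ 5) :
    Integrable (fun x => |x| ^ k * (Real.exp (p * x) + Real.exp (q * x))) K := by
  set S : Set ℝ := {x : ℝ | 1 ≤ |x|} with hS
  have hSmeas : MeasurableSet S :=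
    measurableSet_le measurable_const continuous_abs.measurable
  have hBcont : Continuous (fun x : ℝ => |x| ^ k * (Real.exp (p * x) + Real.exp (q * x))) := by
    fun_prop
  have hOnS : IntegrableOn (fun x => |x| ^ k * (Real.exp (p * x) + Real.exp (q * x))) S K := by
    refine Integrable.mono'
      (g := fun x => (5 / d) ^ 5 * (Real.exp ((p + d) * x) + Real.exp ((p - d) * x)
        + (Real.exp ((q + d) * x) + Real.exp ((q - d) * x))))
      (((h2.add h1).add (h4.add h3)).const_mul _)
      (hBcont.aestronglyMeasurable) ?_
    rw [ae_restrict_iff' hSmeas]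
    filter_upwards with x hx
    have hx1 : (1 : ℝ) ≤ |x| := hx
    have e1 : |x| ^ k ≤ |x| ^ 5 := pow_le_pow_right₀ hx1 hk5
    have e2 : |x| ^ 5 ≤ (5 / d) ^ 5 * Real.exp (d * |x|) := pow_five_le_exp d x hd
    have e3 : Real.exp (d * |x|) ≤ Real.exp (d * x) + Real.exp (-(d * x)) := exp_abs_le d x
    have hprod : (Real.exp (d * x) + Real.exp (-(d * x))) * (Real.exp (p * x) + Real.exp (q * x))
        = Real.exp ((p + d) * x) + Real.exp ((p - d) * x)
          + (Real.exp ((q + d) * x) + Real.exp ((q - d) * x)) := by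
      rw [add_mul, mul_add, mul_add, ← Real.exp_add, ← Real.exp_add, ← Real.exp_add,
        ← Real.exp_add]
      ring_nf
    have hE : (0:ℝ) ≤ Real.exp (p * x) + Real.exp (q * x) := by positivity
    have hnorm : ‖|x| ^ k * (Real.exp (p * x) + Real.exp (q * x))‖
        = |x| ^ k * (Real.exp (p * x) + Real.exp (q * x)) := by
      rw [Real.norm_eq_abs, _root_.abs_of_nonneg (by positivity)]
    rw [hnorm]
    calc |x| ^ k * (Real.exp (p * x) + Real.exp (q * x))
        ≤ ((5 / d) ^ 5 * (Real.exp (d * x) + Real.exp (-(d * x))))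
            * (Real.exp (p * x) + Real.exp (q * x)) := by
          apply mul_le_mul_of_nonneg_right _ hE
          exact e1.trans (e2.trans (mul_le_mul_of_nonneg_left e3 (by positivity)))
      _ = (5 / d) ^ 5 * (Real.exp ((p + d) * x) + Real.exp ((p - d) * x)
          + (Real.exp ((q + d) * x) + Real.exp ((q - d) * x))) := by
          rw [mul_assoc, hprod]
  have hOnSc : IntegrableOn (fun x => |x| ^ k * (Real.exp (p * x) + Real.exp (q * x))) Sᶜ K := by
    refine Integrable.mono'
      (g := fun x => (Real.exp |p| + Real.exp |q|) * x ^ 2)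
      ((sq_integrableOn_compl K hKmin).const_mul _)
      (hBcont.aestronglyMeasurable) ?_
    rw [ae_restrict_iff' hSmeas.compl]
    filter_upwards with x hx
    have hx1 : |x| < 1 := not_le.1 hx
    have e1 : |x| ^ k ≤ |x| ^ 2 := by
      apply pow_le_pow_of_le_one (abs_nonneg x) hx1.le hk2
    have e2 : Real.exp (p * x) ≤ Real.exp |p| := by
      apply Real.exp_le_exp.2
      calc p * x ≤ |p * x| := le_abs_self _
        _ = |p| * |x| := abs_mul p x
        _ ≤ |p| * 1 := mul_le_mul_of_nonneg_left hx1.le (abs_nonneg _)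
        _ = |p| := mul_one _
    have e3 : Real.exp (q * x) ≤ Real.exp |q| := by
      apply Real.exp_le_exp.2
      calc q * x ≤ |q * x| := le_abs_self _
        _ = |q| * |x| := abs_mul q x
        _ ≤ |q| * 1 := mul_le_mul_of_nonneg_left hx1.le (abs_nonneg _)
        _ = |q| := mul_one _
    have hnorm : ‖|x| ^ k * (Real.exp (p * x) + Real.exp (q * x))‖
        = |x| ^ k * (Real.exp (p * x) + Real.exp (q * x)) := by
      rw [Real.norm_eq_abs, _root_.abs_of_nonneg (by positivity)]
    rw [hnorm]
    calc |x| ^ k * (Real.exp (p * x) + Real.exp (q * x))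
        ≤ |x| ^ 2 * (Real.exp |p| + Real.exp |q|) := by
          apply mul_le_mul e1 (by linarith) (by positivity) (by positivity)
      _ = (Real.exp |p| + Real.exp |q|) * x ^ 2 := by
          rw [_root_.sq_abs]; ring
  have := hOnS.union hOnSc
  rwa [union_compl_self, integrableOn_univ] at this

/-- Cumulant generating function `κ(λ, z)` of the interpolating family. -/
noncomputable def kappa (μ c : ℝ) (K : Measure ℝ) (lam : ℝ) (z : ℂ) : ℂ :=
  if lam = 0 then (μ : ℂ) * z + (((c + ∫ x : ℝ, x ^ 2 ∂K) : ℝ) : ℂ) / 2 * z ^ 2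
  else (μ : ℂ) * z + (c : ℂ) / 2 * z ^ 2 +
    ((lam : ℂ) ^ 2)⁻¹ *
      ∫ x : ℝ, (Complex.exp ((lam : ℂ) * z * (x : ℂ)) - 1 - (lam : ℂ) * z * (x : ℂ)) ∂K

noncomputable def kbar (μ c : ℝ) (K : Measure ℝ) (lam : ℝ) (y z : ℂ) : ℂ :=
  kappa μ c K lam (y + z) - kappa μ c K lam y - kappa μ c K lam z

noncomputable def gamLK (μ c : ℝ) (K : Measure ℝ) (lam : ℝ) (z : ℂ) : ℂ :=
  kbar μ c K lam z 1 / kbar μ c K lam 1 1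

noncomputable def etaLK (μ c : ℝ) (K : Measure ℝ) (lam : ℝ) (z : ℂ) : ℂ :=
  kappa μ c K lam z - kappa μ c K lam 1 * gamLK μ c K lam z

set_option maxHeartbeats 2000000 in
/-- polynomial bound, uniform in `λ`, on `κ` and its first two partial
`λ`-derivatives (estimate in Proposition `kappa`). -/
theorem kappa_lambda_derivatives_polynomial_bound
    (μ c : ℝ) (hc : 0 ≤ c) (K : MeasureTheory.Measure ℝ)
    (hK0 : K {0} = 0)
    (hKmin : ∫⁻ x : ℝ, ENNReal.ofReal (min 1 (x ^ 2)) ∂K ≠ ⊤)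
    (R : ℝ) (hR : R ≠ 0) (a b : ℝ)
    (h0 : (0 : ℝ) ∈ Set.Ioo a b) (h2 : (2 : ℝ) ∈ Set.Ioo a b)
    (h2R : 2 * R ∈ Set.Ioo a b)
    (hK5 : ∫⁻ x in {x : ℝ | 1 ≤ |x|}, ENNReal.ofReal (|x| ^ 5) ∂K ≠ ⊤)
    (hKexp : ∀ s ∈ Set.Ioo a b,
      ∫⁻ x in {x : ℝ | 1 ≤ |x|}, ENNReal.ofReal (Real.exp (s * x)) ∂K ≠ ⊤)
    (σ2 : ℝ) (hσ2 : σ2 = c + ∫ x : ℝ, x ^ 2 ∂K) (hσ2pos : 0 < σ2)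
    :
    ∃ c₁ : ℝ, 0 < c₁ ∧
      ∀ lam ∈ Set.Icc (0 : ℝ) 1, ∀ z : ℂ, z.re ∈ ({0, R, 2 * R} : Set ℝ) →
        ∀ n ∈ ({0, 1, 2} : Set ℕ),
          ‖iteratedDerivWithin n (fun l => kappa μ c K l z) (Set.Icc 0 1) lam‖ ≤
            c₁ * (1 + ‖z‖ ^ (3 + n)) := by
  classical
  set m : ℝ := min 0 (2 * R) with hm
  set M : ℝ := max 0 (2 * R) with hM
  have ham : a < m := lt_min h0.1 h2R.1
  have hMb : M < b := max_lt h0.2 h2R.2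
  have hm0 : m ≤ 0 := min_le_left _ _
  have h0M : 0 ≤ M := le_max_left _ _
  have hM2R : M ≤ 2 * |R| := by
    apply max_le (by positivity)
    nlinarith [le_abs_self R, abs_nonneg R]
  have hm2R : -(2 * |R|) ≤ m := by
    refine le_min (neg_nonpos.mpr (by positivity)) ?_
    nlinarith [neg_abs_le R, abs_nonneg R]
  set d : ℝ := min (m - a) (b - M) / 3 with hd
  have hdpos : 0 < d := by
    apply div_pos _ (by norm_num)
    exact lt_min (by linarith) (by linarith)
  have hd1 : 3 * d ≤ m - a := by
    have := min_le_left (m - a) (b - M); rw [hd]; linarith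
  have hd2 : 3 * d ≤ b - M := by
    have := min_le_right (m - a) (b - M); rw [hd]; linarith
  set q₁ : ℝ := m - d with hq₁
  set q₂ : ℝ := M + d with hq₂
  have hexpInt : ∀ s : ℝ, a < s → s < b →
      IntegrableOn (fun x => Real.exp (s * x)) {x : ℝ | 1 ≤ |x|} K :=
    fun s hs1 hs2 => exp_integrableOn K s (hKexp s ⟨hs1, hs2⟩)
  have hBint : ∀ k : ℕ, 2 ≤ k → k ≤ 5 →
      Integrable (fun x => |x| ^ k * (Real.exp (q₁ * x) + Real.exp (q₂ * x))) K := by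
    intro k hk2 hk5
    refine integrable_bound K hKmin d q₁ q₂ hdpos ?_ ?_ ?_ ?_ k hk2 hk5
    · exact hexpInt (q₁ - d) (by rw [hq₁]; linarith) (by rw [hq₁]; linarith)
    · exact hexpInt (q₁ + d) (by rw [hq₁]; linarith) (by rw [hq₁]; linarith)
    · exact hexpInt (q₂ - d) (by rw [hq₂]; linarith) (by rw [hq₂]; linarith)
    · exact hexpInt (q₂ + d) (by rw [hq₂]; linarith) (by rw [hq₂]; linarith)
  set ε : ℝ := d / (2 * |R| + 1) with hε
  have hεpos : 0 < ε := div_pos hdpos (by positivity)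
  have hεR : ε * (2 * |R|) ≤ d := by
    rw [hε, div_mul_eq_mul_div, div_le_iff₀ (by positivity)]
    nlinarith [abs_nonneg R]
  set B0 : ℝ := ∫ x, |x| ^ 2 * (Real.exp (q₁ * x) + Real.exp (q₂ * x)) ∂K with hB0
  set B1 : ℝ := ∫ x, |x| ^ 3 * (Real.exp (q₁ * x) + Real.exp (q₂ * x)) ∂K with hB1
  set B2 : ℝ := ∫ x, |x| ^ 4 * (Real.exp (q₁ * x) + Real.exp (q₂ * x)) ∂K with hB2
  have hB0n : 0 ≤ B0 := integral_nonneg fun x => by positivity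
  have hB1n : 0 ≤ B1 := integral_nonneg fun x => by positivity
  have hB2n : 0 ≤ B2 := integral_nonneg fun x => by positivity
  refine ⟨|μ| + c / 2 + B0 + B1 + B2 + 1, by positivity, ?_⟩
  intro lam hlam z hz n hn
  -- facts about z.re
  have hzre : m ≤ z.re ∧ z.re ≤ M := by
    simp only [Set.mem_insert_iff, Set.mem_singleton_iff] at hz
    rcases hz with h | h | h <;> rw [h]
    · exact ⟨hm0, h0M⟩
    · rcases le_total 0 R with hr | hr
      · constructor
        · exact le_trans hm0 hr
        · exact le_trans (by linarith) (le_max_right _ _)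
      · constructor
        · exact le_trans (min_le_right _ _) (by linarith)
        · linarith [h0M]
    · exact ⟨min_le_right _ _, le_max_right _ _⟩
  -- range of exponents
  have hrange : ∀ l : ℝ, -ε < l → l < 1 + ε → ∀ t ∈ Set.Ioc (0:ℝ) 1,
      q₁ ≤ l * t * z.re ∧ l * t * z.re ≤ q₂ := by
    intro l hl1 hl2 t ht
    have ht0 : 0 < t := ht.1
    have ht1 : t ≤ 1 := ht.2
    have hu1 : -ε ≤ l * t := by
      linarith [mul_nonneg (by linarith : (0:ℝ) ≤ l + ε) ht0.le,
        mul_nonneg hεpos.le (by linarith : (0:ℝ) ≤ 1 - t)]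
    have hu2 : l * t ≤ 1 + ε := by
      linarith [mul_nonneg (by linarith : (0:ℝ) ≤ 1 + ε - l) ht0.le,
        mul_nonneg (by linarith : (0:ℝ) ≤ 1 + ε) (by linarith : (0:ℝ) ≤ 1 - t)]
    have hr1 : m ≤ z.re := hzre.1
    have hr2 : z.re ≤ M := hzre.2
    constructor
    · rcases le_total 0 z.re with hr | hr
      · have p1 : (-ε) * z.re ≤ l * t * z.re := mul_le_mul_of_nonneg_right hu1 hr
        have p2 : ε * z.re ≤ ε * (2 * |R|) :=
          mul_le_mul_of_nonneg_left (le_trans hr2 hM2R) hεpos.le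
        rw [hq₁]; linarith [hεR, hm0, hdpos]
      · have p1 : (1 + ε) * z.re ≤ l * t * z.re := mul_le_mul_of_nonpos_right hu2 hr
        have p2 : ε * (-(2 * |R|)) ≤ ε * z.re :=
          mul_le_mul_of_nonneg_left (by linarith) hεpos.le
        rw [hq₁]; linarith [hεR, hm0, hdpos]
    · rcases le_total 0 z.re with hr | hr
      · have p1 : l * t * z.re ≤ (1 + ε) * z.re := mul_le_mul_of_nonneg_right hu2 hr
        have p2 : ε * z.re ≤ ε * (2 * |R|) :=
          mul_le_mul_of_nonneg_left (le_trans hr2 hM2R) hεpos.le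
        rw [hq₂]; linarith [hεR, h0M, hdpos]
      · have p1 : l * t * z.re ≤ (-ε) * z.re := mul_le_mul_of_nonpos_right hu1 hr
        have p2 : ε * (-(2 * |R|)) ≤ ε * z.re :=
          mul_le_mul_of_nonneg_left (by linarith) hεpos.le
        rw [hq₂]; linarith [hεR, h0M, hdpos]
  have hgb : ∀ k : ℕ, ∀ l : ℝ, -ε < l → l < 1 + ε → ∀ x : ℝ,
      ‖gnAux z k l x‖ ≤ |x| ^ (2 + k) * (Real.exp (q₁ * x) + Real.exp (q₂ * x)) :=
    fun k l h1 h2 x => gnAux_norm_le z k l x q₁ q₂ (hrange l h1 h2)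
  have hgint : ∀ k : ℕ, k ≤ 3 → ∀ l : ℝ, -ε < l → l < 1 + ε →
      Integrable (fun x => gnAux z k l x) K := by
    intro k hk l h1 h2
    exact Integrable.mono' (hBint (2 + k) (by omega) (by omega))
      ((gnAux_stronglyMeasurable z k l).aestronglyMeasurable)
      (Filter.Eventually.of_forall fun x => hgb k l h1 h2 x)
  have hKg : ∀ k : ℕ, k ≤ 2 → ∀ lam₀ ∈ Set.Icc (0:ℝ) 1,
      HasDerivAt (fun l => ∫ x, gnAux z k l x ∂K)
        (z * ∫ x, gnAux z (k + 1) lam₀ x ∂K) lam₀ := by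
    intro k hk lam₀ hlam₀
    have hball : ∀ l ∈ Metric.ball lam₀ ε, -ε < l ∧ l < 1 + ε := by
      intro l hl
      have hd : |l - lam₀| < ε := by
        have := Metric.mem_ball.1 hl
        rwa [Real.dist_eq] at this
      have := abs_lt.1 hd
      constructor <;> [linarith [hlam₀.1, this.1]; linarith [hlam₀.2, this.2]]
    have h := hasDerivAt_integral_of_dominated_loc_of_deriv_le (μ := K)
      (F := fun l x => gnAux z k l x) (F' := fun l x => z * gnAux z (k + 1) l x)
      (x₀ := lam₀)
      (bound := fun x => ‖z‖ * (|x| ^ (2 + (k + 1)) * (Real.exp (q₁ * x) + Real.exp (q₂ * x))))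
      (Metric.ball_mem_nhds lam₀ hεpos)
      (Filter.Eventually.of_forall fun l =>
        (gnAux_stronglyMeasurable z k l).aestronglyMeasurable)
      (hgint k (by omega) lam₀ (by linarith [hlam₀.1, hεpos]) (by linarith [hlam₀.2, hεpos]))
      (((gnAux_stronglyMeasurable z (k + 1) lam₀).const_mul z).aestronglyMeasurable)
      (Filter.Eventually.of_forall fun x l hl => by
        rw [norm_mul]
        exact mul_le_mul_of_nonneg_left
          (hgb (k + 1) l (hball l hl).1 (hball l hl).2 x) (norm_nonneg z))
      ((hBint (2 + (k + 1)) (by omega) (by omega)).const_mul ‖z‖)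
      (Filter.Eventually.of_forall fun x l hl => gnAux_hasDerivAt z k x l)
    have h2 := h.2
    rwa [integral_const_mul] at h2
  have hIx2 : Integrable (fun x : ℝ => x ^ 2) K := by
    refine (hBint 2 le_rfl (by omega)).mono'
      (Continuous.aestronglyMeasurable (by fun_prop))
      (Filter.Eventually.of_forall fun x => ?_)
    have hE1 : (1:ℝ) ≤ Real.exp (q₁ * x) + Real.exp (q₂ * x) := by
      rcases le_total 0 x with hx | hx
      · have h2 : (1:ℝ) ≤ Real.exp (q₂ * x) := by
          apply Real.one_le_exp
          have : (0:ℝ) ≤ q₂ := by rw [hq₂]; linarith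
          positivity
        linarith [(Real.exp_pos (q₁ * x)).le]
      · have h2 : (1:ℝ) ≤ Real.exp (q₁ * x) := by
          apply Real.one_le_exp
          have hq1le : q₁ ≤ 0 := by rw [hq₁]; linarith
          nlinarith
        linarith [(Real.exp_pos (q₂ * x)).le]
    rw [Real.norm_eq_abs, _root_.abs_of_nonneg (sq_nonneg x)]
    nlinarith [_root_.sq_abs x, sq_nonneg x]
  -- the function agrees with its integral representation on Icc 0 1
  have hEq : ∀ l ∈ Set.Icc (0:ℝ) 1, kappa μ c K l z
      = (μ:ℂ) * z + (c:ℂ) / 2 * z ^ 2 + z ^ 2 * ∫ x, gnAux z 0 l x ∂K := by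
    intro l _
    by_cases h : l = 0
    · subst h
      rw [kappa, if_pos rfl]
      have h1 : (∫ x, gnAux z 0 0 x ∂K) = ∫ x : ℝ, (((x ^ 2 / 2 : ℝ)) : ℂ) ∂K :=
        integral_congr_ae (Filter.Eventually.of_forall fun x => by
          rw [gnAux_zero_eq]; push_cast; ring)
      rw [h1]
      have hx2 : Integrable (fun x : ℝ => x ^ 2 / 2) K := hIx2.div_const 2
      have h2 := (ContinuousLinearMap.integral_comp_comm Complex.ofRealCLM hx2).symm
      simp only [Complex.ofRealCLM_apply] at h2
      rw [← h2, integral_div]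
      push_cast
      ring
    · rw [kappa, if_neg h]
      have key : (∫ x : ℝ, (Complex.exp ((l:ℂ) * z * (x:ℂ)) - 1 - (l:ℂ) * z * (x:ℂ)) ∂K)
          = ((l:ℂ) ^ 2 * z ^ 2) * ∫ x, gnAux z 0 l x ∂K := by
        rw [← integral_const_mul]
        exact integral_congr_ae (Filter.Eventually.of_forall fun x => integrand_eq z l x)
      rw [key]
      have hl2 : ((l:ℂ)) ^ 2 ≠ 0 := pow_ne_zero _ (Complex.ofReal_ne_zero.2 h)
      rw [mul_assoc, inv_mul_cancel_left₀ hl2]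
  have hUD : UniqueDiffOn ℝ (Set.Icc (0:ℝ) 1) := uniqueDiffOn_Icc (by norm_num)
  have hD1 : ∀ l ∈ Set.Icc (0:ℝ) 1,
      derivWithin (fun l' => kappa μ c K l' z) (Set.Icc 0 1) l
        = z ^ 2 * (z * ∫ x, gnAux z 1 l x ∂K) := by
    intro l hl
    rw [derivWithin_congr (fun l' hl' => hEq l' hl') (hEq l hl)]
    have hF : HasDerivAt
        (fun l' : ℝ => (μ:ℂ) * z + (c:ℂ) / 2 * z ^ 2 + z ^ 2 * ∫ x, gnAux z 0 l' x ∂K)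
        (z ^ 2 * (z * ∫ x, gnAux z 1 l x ∂K)) l :=
      ((hKg 0 (by omega) l hl).const_mul (z ^ 2)).const_add _
    exact hF.hasDerivWithinAt.derivWithin (hUD l hl)
  -- norms of integrals
  have hKgB : ∀ k : ℕ, (hk : 2 ≤ 2 + k) → (2 + k ≤ 5) → ∀ l : ℝ, l ∈ Set.Icc (0:ℝ) 1 →
      ‖∫ x, gnAux z k l x ∂K‖
        ≤ ∫ x, |x| ^ (2 + k) * (Real.exp (q₁ * x) + Real.exp (q₂ * x)) ∂K := by
    intro k hk1 hk2 l hl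
    exact norm_integral_le_of_norm_le (hBint (2 + k) hk1 hk2)
      (Filter.Eventually.of_forall fun x =>
        hgb k l (by linarith [hl.1, hεpos]) (by linarith [hl.2, hεpos]) x)
  have hznn : (0:ℝ) ≤ ‖z‖ := norm_nonneg z
  have hmuz : ‖(μ:ℂ) * z‖ = |μ| * ‖z‖ := by
    rw [norm_mul, Complex.norm_real, Real.norm_eq_abs]
  have hcz : ‖(c:ℂ) / 2 * z ^ 2‖ = c / 2 * ‖z‖ ^ 2 := by
    have hcc : ((c:ℂ)) / 2 = (((c / 2 : ℝ)) : ℂ) := by push_cast; ring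
    rw [hcc, norm_mul, Complex.norm_real, Real.norm_eq_abs, norm_pow,
      _root_.abs_of_nonneg (by linarith)]
  simp only [Set.mem_insert_iff, Set.mem_singleton_iff] at hn
  rcases hn with h | h | h <;> subst h
  · -- n = 0
    simp only [iteratedDerivWithin_zero]
    rw [hEq lam hlam]
    have hb : ‖∫ x, gnAux z 0 lam x ∂K‖ ≤ B0 := by
      exact hKgB 0 (by omega) (by omega) lam hlam
    have h1 : ‖(μ:ℂ) * z + (c:ℂ) / 2 * z ^ 2 + z ^ 2 * ∫ x, gnAux z 0 lam x ∂K‖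
        ≤ |μ| * ‖z‖ + c / 2 * ‖z‖ ^ 2 + ‖z‖ ^ 2 * B0 := by
      calc ‖(μ:ℂ) * z + (c:ℂ) / 2 * z ^ 2 + z ^ 2 * ∫ x, gnAux z 0 lam x ∂K‖
          ≤ ‖(μ:ℂ) * z + (c:ℂ) / 2 * z ^ 2‖ + ‖z ^ 2 * ∫ x, gnAux z 0 lam x ∂K‖ :=
            norm_add_le _ _
        _ ≤ ‖(μ:ℂ) * z‖ + ‖(c:ℂ) / 2 * z ^ 2‖ + ‖z ^ 2 * ∫ x, gnAux z 0 lam x ∂K‖ := by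
            linarith [norm_add_le ((μ:ℂ) * z) ((c:ℂ) / 2 * z ^ 2)]
        _ ≤ |μ| * ‖z‖ + c / 2 * ‖z‖ ^ 2 + ‖z‖ ^ 2 * B0 := by
            rw [hmuz, hcz, norm_mul, norm_pow]
            have := mul_le_mul_of_nonneg_left hb (pow_nonneg hznn 2)
            linarith
    refine h1.trans ?_
    have e1 : ‖z‖ ≤ 1 + ‖z‖ ^ 3 := by
      simpa using pow_le_one_add_pow ‖z‖ hznn 1 3 (by omega)
    have e2 : ‖z‖ ^ 2 ≤ 1 + ‖z‖ ^ 3 := pow_le_one_add_pow ‖z‖ hznn 2 3 (by omega)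
    have e3 : (0:ℝ) ≤ 1 + ‖z‖ ^ 3 := by positivity
    have t1 : |μ| * ‖z‖ ≤ |μ| * (1 + ‖z‖ ^ 3) := mul_le_mul_of_nonneg_left e1 (abs_nonneg μ)
    have t2 : c / 2 * ‖z‖ ^ 2 ≤ c / 2 * (1 + ‖z‖ ^ 3) :=
      mul_le_mul_of_nonneg_left e2 (by linarith)
    have t3 : ‖z‖ ^ 2 * B0 ≤ (1 + ‖z‖ ^ 3) * B0 := mul_le_mul_of_nonneg_right e2 hB0n
    norm_num
    nlinarith [mul_nonneg hB1n e3, mul_nonneg hB2n e3]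
  · -- n = 1
    rw [iteratedDerivWithin_one, hD1 lam hlam]
    have hb : ‖∫ x, gnAux z 1 lam x ∂K‖ ≤ B1 := by
      exact hKgB 1 (by omega) (by omega) lam hlam
    have h1 : ‖z ^ 2 * (z * ∫ x, gnAux z 1 lam x ∂K)‖ ≤ ‖z‖ ^ 3 * B1 := by
      rw [norm_mul, norm_mul, norm_pow]
      calc ‖z‖ ^ 2 * (‖z‖ * ‖∫ x, gnAux z 1 lam x ∂K‖)
          = ‖z‖ ^ 3 * ‖∫ x, gnAux z 1 lam x ∂K‖ := by ring
        _ ≤ ‖z‖ ^ 3 * B1 := mul_le_mul_of_nonneg_left hb (pow_nonneg hznn 3)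
    refine h1.trans ?_
    have e1 : ‖z‖ ^ 3 ≤ 1 + ‖z‖ ^ 4 := pow_le_one_add_pow ‖z‖ hznn 3 4 (by omega)
    have e3 : (0:ℝ) ≤ 1 + ‖z‖ ^ 4 := by positivity
    have t1 : ‖z‖ ^ 3 * B1 ≤ (1 + ‖z‖ ^ 4) * B1 := mul_le_mul_of_nonneg_right e1 hB1n
    norm_num
    nlinarith [mul_nonneg (abs_nonneg μ) e3, mul_nonneg hc e3, mul_nonneg hB0n e3,
      mul_nonneg hB2n e3]
  · -- n = 2
    rw [show (2:ℕ) = 1 + 1 from rfl, iteratedDerivWithin_succ]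
    have hEq1 : Set.EqOn (iteratedDerivWithin 1 (fun l => kappa μ c K l z) (Set.Icc 0 1))
        (fun l => z ^ 2 * (z * ∫ x, gnAux z 1 l x ∂K)) (Set.Icc 0 1) := by
      intro l hl
      rw [iteratedDerivWithin_one, hD1 l hl]
    rw [derivWithin_congr hEq1 (hEq1 hlam)]
    have hF2 : HasDerivAt (fun l => z ^ 2 * (z * ∫ x, gnAux z 1 l x ∂K))
        (z ^ 2 * (z * (z * ∫ x, gnAux z 2 lam x ∂K))) lam :=
      ((hKg 1 (by omega) lam hlam).const_mul z).const_mul (z ^ 2)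
    rw [hF2.hasDerivWithinAt.derivWithin (hUD lam hlam)]
    have hb : ‖∫ x, gnAux z 2 lam x ∂K‖ ≤ B2 := by
      exact hKgB 2 (by omega) (by omega) lam hlam
    have h1 : ‖z ^ 2 * (z * (z * ∫ x, gnAux z 2 lam x ∂K))‖ ≤ ‖z‖ ^ 4 * B2 := by
      rw [norm_mul, norm_mul, norm_mul, norm_pow]
      calc ‖z‖ ^ 2 * (‖z‖ * (‖z‖ * ‖∫ x, gnAux z 2 lam x ∂K‖))
          = ‖z‖ ^ 4 * ‖∫ x, gnAux z 2 lam x ∂K‖ := by ring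
        _ ≤ ‖z‖ ^ 4 * B2 := mul_le_mul_of_nonneg_left hb (pow_nonneg hznn 4)
    refine h1.trans ?_
    have e1 : ‖z‖ ^ 4 ≤ 1 + ‖z‖ ^ 5 := pow_le_one_add_pow ‖z‖ hznn 4 5 (by omega)
    have e3 : (0:ℝ) ≤ 1 + ‖z‖ ^ 5 := by positivity
    have t1 : ‖z‖ ^ 4 * B2 ≤ (1 + ‖z‖ ^ 5) * B2 := mul_le_mul_of_nonneg_right e1 hB2n
    norm_num
    nlinarith [mul_nonneg (abs_nonneg μ) e3, mul_nonneg hc e3, mul_nonneg hB0n e3,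
      mul_nonneg hB1n e3]
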